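/- Suppose a nonnegative sequence (f_t)_{t=0}^{T} satisfies f_t ≤ sqrt(a_0·f_{t-1}) + a_1 for all t in {1,...,T}, where a_0, a_1 > 0 and f_0 > 2a_1 + a_0. Then for all t in {0,...,T}, f_t ≤ (f_0/(2a_1 + a_0))^{2^{-t}} · (2a_1 + a_0). -/

import Mathlib

/-- If a nonnegative sequence satisfies `f t ≤ √(a₀ f_{t-1}) + a₁` for `t = 1,…,T` with
`a₀, a₁ > 0` and `f 0 > 2a₁ + a₀`, then
`f t ≤ (f 0/(2a₁+a₀))^(2⁻ᵗ) · (2a₁+a₀)` for all `t ≤ T`. -/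
theorem stmt4 (T : ℕ) (f : ℕ → ℝ) (a0 a1 : ℝ)
    (ha0 : 0 < a0) (ha1 : 0 < a1)
    (hfnonneg : ∀ t ≤ T, 0 ≤ f t)
    (hf0 : 2 * a1 + a0 < f 0)
    (hrec : ∀ t, 1 ≤ t → t ≤ T → f t ≤ Real.sqrt (a0 * f (t - 1)) + a1) :
    ∀ t ≤ T, f t ≤ (f 0 / (2 * a1 + a0)) ^ ((1 : ℝ) / 2 ^ t) * (2 * a1 + a0) := by
  set B := 2 * a1 + a0 with hB
  have hBpos : 0 < B := by positivity
  set r := f 0 / B with hrdef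
  have hrpos : 0 < r := div_pos (hBpos.trans hf0) hBpos
  have hr1 : 1 ≤ r := le_of_lt ((one_lt_div hBpos).2 hf0)
  intro t
  induction t with
  | zero =>
    intro _
    have : r ^ ((1 : ℝ) / 2 ^ (0:ℕ)) = r := by
      norm_num
    rw [this, hrdef]
    field_simp
    exact le_rfl
  | succ n ih =>
    intro ht
    have hn : n ≤ T := Nat.le_of_succ_le ht
    have ihn := ih hn
    set x := r ^ ((1 : ℝ) / 2 ^ (n+1)) with hxdef
    have hx1 : 1 ≤ x := by
      have := Real.rpow_le_rpow_of_exponent_le hr1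
        (show (0:ℝ) ≤ (1 : ℝ) / 2 ^ (n+1) by positivity)
      rw [Real.rpow_zero] at this
      rw [hxdef, one_div]
      rw [one_div] at this
      exact this
    have hx0 : 0 ≤ x := by linarith
    have hx2 : x * x = r ^ ((1 : ℝ) / 2 ^ n) := by
      rw [hxdef, ← Real.rpow_add hrpos]
      congr 1
      rw [pow_succ]
      field_simp
      ring
    have hfn : f n ≤ x * x * B := by
      rw [hx2]; exact ihn
    have hstep : f (n+1) ≤ Real.sqrt (a0 * f n) + a1 := by
      have := hrec (n+1) (Nat.le_add_left 1 n) ht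
      simpa using this
    have hsq : Real.sqrt (a0 * f n) ≤ x * Real.sqrt (a0 * B) := by
      have h1 : Real.sqrt (a0 * f n) ≤ Real.sqrt (a0 * (x * x * B)) := by
        apply Real.sqrt_le_sqrt
        nlinarith
      have h2 : Real.sqrt (a0 * (x * x * B)) = x * Real.sqrt (a0 * B) := by
        rw [show a0 * (x * x * B) = (x * x) * (a0 * B) by ring,
          Real.sqrt_mul (by positivity), Real.sqrt_mul_self hx0]
      linarith
    have hAM : Real.sqrt (a0 * B) ≤ (a0 + B) / 2 := by
      rw [show (a0 + B) / 2 = Real.sqrt (((a0 + B) / 2) ^ 2) by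
        rw [Real.sqrt_sq (by positivity)]]
      apply Real.sqrt_le_sqrt
      nlinarith
    have : f (n+1) ≤ x * ((a0 + B) / 2) + a1 := by
      have := mul_le_mul_of_nonneg_left hAM hx0
      linarith
    calc f (n+1) ≤ x * ((a0 + B) / 2) + a1 := this
      _ ≤ x * B := by nlinarith [hB]
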